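/- arXiv:2507.07848 — 3 statements merged into one kernel-verified Lean document; each statement's English description precedes it below -/
import Mathlib

section
/- Performance difference lemma: for any two stationary policies π and π' on a finite discounted MDP with starting distribution μ, J_μ^{π'} − J_μ^{π} = (1/(1-γ)) ∑_{s} d_μ^{π'}(s) ∑_{a} π'(a|s) A^{π}(s,a), where d_μ^{π'} is the γ-discounted state occupancy distribution of π' (normalized by (1-γ)). -/
/-- State distribution at time t under transition kernel `Ppi` from initial distribution `μ`. -/
noncomputable def stateDist {S : Type*} [Fintype S]
    (Ppi : S → S → ℝ) (μ : S → ℝ) : ℕ → S → ℝ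
  | 0 => μ
  | t + 1 => fun s' => ∑ s, stateDist Ppi μ t s * Ppi s s'

/-- γ-discounted (1-γ)-normalized state occupancy measure. -/
noncomputable def occupancy {S : Type*} [Fintype S]
    (Ppi : S → S → ℝ) (μ : S → ℝ) (γ : ℝ) (s : S) : ℝ :=
  (1 - γ) * ∑' t : ℕ, γ ^ t * stateDist Ppi μ t s

/-- Transition kernel over states induced by policy π. -/
noncomputable def inducedKernel {S A : Type*} [Fintype A]
    (P : S → A → S → ℝ) (π : S → A → ℝ) : S → S → ℝ :=
  fun s s' => ∑ a, π s a * P s a s'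

/-- Performance difference lemma:
J_μ^{π'} − J_μ^{π} = (1/(1-γ)) ∑_s d_μ^{π'}(s) ∑_a π'(a|s) A^{π}(s,a). -/
theorem performance_difference_lemma
    {S A : Type*} [Fintype S] [Fintype A]
    (P : S → A → S → ℝ) (R : S → A → ℝ) (γ : ℝ)
    (hγ0 : 0 ≤ γ) (hγ1 : γ < 1)
    (hP0 : ∀ s a s', 0 ≤ P s a s') (hP1 : ∀ s a, ∑ s', P s a s' = 1)
    (π π' : S → A → ℝ)
    (hπ0 : ∀ s a, 0 ≤ π s a) (hπ1 : ∀ s, ∑ a, π s a = 1)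
    (hπ'0 : ∀ s a, 0 ≤ π' s a) (hπ'1 : ∀ s, ∑ a, π' s a = 1)
    (μ : S → ℝ) (hμ0 : ∀ s, 0 ≤ μ s) (hμ1 : ∑ s, μ s = 1)
    (V V' : S → ℝ)
    (hV : ∀ s, V s = ∑ a, π s a * (R s a + γ * ∑ s', P s a s' * V s'))
    (hV' : ∀ s, V' s = ∑ a, π' s a * (R s a + γ * ∑ s', P s a s' * V' s'))
    (Q : S → A → ℝ) (hQ : ∀ s a, Q s a = R s a + γ * ∑ s', P s a s' * V s')
    (Adv : S → A → ℝ) (hAdv : ∀ s a, Adv s a = Q s a - V s) :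
    (∑ s, μ s * V' s) - (∑ s, μ s * V s) =
      (1 / (1 - γ)) *
        ∑ s, occupancy (inducedKernel P π') μ γ s * ∑ a, π' s a * Adv s a := by
  classical
  set K := inducedKernel P π' with hKdef
  have hK0 : ∀ s s', 0 ≤ K s s' :=
    fun s s' => Finset.sum_nonneg fun a _ => mul_nonneg (hπ'0 s a) (hP0 s a s')
  have hK1 : ∀ s, ∑ s', K s s' = 1 := by
    intro s
    simp only [hKdef, inducedKernel]
    rw [Finset.sum_comm]
    simp only [← Finset.mul_sum, hP1, mul_one]
    exact hπ'1 s
  set d := stateDist K μ with hddef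
  have hd0 : ∀ t s, 0 ≤ d t s := by
    intro t
    induction t with
    | zero => exact hμ0
    | succ t ih =>
      intro s
      exact Finset.sum_nonneg fun s' _ => mul_nonneg (ih s') (hK0 s' s)
  have hd1 : ∀ t, ∑ s, d t s = 1 := by
    intro t
    induction t with
    | zero => exact hμ1
    | succ t ih =>
      show ∑ s, ∑ s', d t s' * K s' s = 1
      rw [Finset.sum_comm]
      simp only [← Finset.mul_sum, hK1, mul_one]
      exact ih
  have hdle : ∀ t s, d t s ≤ 1 := by
    intro t s
    calc d t s ≤ ∑ s', d t s' :=
          Finset.single_le_sum (fun s' _ => hd0 t s') (Finset.mem_univ s)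
      _ = 1 := hd1 t
  set D := fun s => V' s - V s with hDdef
  set g := fun s => ∑ a, π' s a * Adv s a with hgdef
  -- pointwise Bellman-type identity
  have hD : ∀ s, D s = g s + γ * ∑ s', K s s' * D s' := by
    intro s
    have h1 : g s = (∑ a, π' s a * (R s a + γ * ∑ s', P s a s' * V s')) - V s := by
      simp only [hgdef, hAdv, hQ, mul_sub, Finset.sum_sub_distrib, ← Finset.sum_mul, hπ'1,
        one_mul]
    have h2 : γ * ∑ s', K s s' * D s' =
        ∑ a, π' s a * (γ * ∑ s', P s a s' * D s') := by
      simp only [hKdef, inducedKernel, Finset.sum_mul, Finset.mul_sum]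
      rw [Finset.sum_comm]
      exact Finset.sum_congr rfl fun a _ => Finset.sum_congr rfl fun s' _ => by ring
    have h3 : ∑ a, π' s a * (R s a + γ * ∑ s', P s a s' * V' s') =
        (∑ a, π' s a * (R s a + γ * ∑ s', P s a s' * V s')) +
        ∑ a, π' s a * (γ * ∑ s', P s a s' * D s') := by
      rw [← Finset.sum_add_distrib]
      refine Finset.sum_congr rfl fun a _ => ?_
      have h4 : ∑ s', P s a s' * V' s' =
          (∑ s', P s a s' * V s') + ∑ s', P s a s' * D s' := by
        rw [← Finset.sum_add_distrib]
        refine Finset.sum_congr rfl fun s' _ => ?_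
        simp only [hDdef]; ring
      rw [h4]; ring
    show V' s - V s = g s + γ * ∑ s', K s s' * D s'
    rw [h1, h2, hV' s, h3]
    ring
  set G := fun t => ∑ s, d t s * g s with hGdef
  set f := fun t => ∑ s, d t s * D s with hfdef
  -- recursion
  have hdsucc : ∀ t (s' : S), d (t + 1) s' = ∑ s, d t s * K s s' := by
    intro t s'; simp [hddef, stateDist]
  have hf : ∀ t, f t = G t + γ * f (t + 1) := by
    intro t
    have e1 : f t = ∑ s, (d t s * g s + ∑ s', γ * (d t s * (K s s' * D s'))) := by
      refine Finset.sum_congr rfl fun s _ => ?_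
      rw [hD s, mul_add]
      congr 1
      simp only [Finset.mul_sum]
      exact Finset.sum_congr rfl fun s' _ => by ring
    have e2 : ∑ s, ∑ s', γ * (d t s * (K s s' * D s')) = γ * f (t + 1) := by
      rw [Finset.sum_comm]
      show _ = γ * ∑ s', d (t + 1) s' * D s'
      rw [Finset.mul_sum]
      refine Finset.sum_congr rfl fun s' _ => ?_
      rw [hdsucc t s', Finset.sum_mul, Finset.mul_sum]
      exact Finset.sum_congr rfl fun s _ => by ring
    rw [e1, Finset.sum_add_distrib, e2]
  -- telescoping
  have htel : ∀ n, f 0 = (∑ t ∈ Finset.range n, γ ^ t * G t) + γ ^ n * f n := by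
    intro n
    induction n with
    | zero => simp
    | succ n ih =>
      rw [ih, Finset.sum_range_succ, hf n]
      ring
  -- bounds
  set M := ∑ s, |D s| with hMdef
  set Mg := ∑ s, |g s| with hMgdef
  have hMg0 : 0 ≤ Mg := Finset.sum_nonneg fun s _ => abs_nonneg _
  have hfb : ∀ n, |f n| ≤ M := by
    intro n
    calc |f n| ≤ ∑ s, |d n s * D s| := Finset.abs_sum_le_sum_abs _ _
      _ ≤ M := Finset.sum_le_sum fun s _ => by
          rw [abs_mul, abs_of_nonneg (hd0 n s)]
          exact mul_le_of_le_one_left (abs_nonneg _) (hdle n s)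
  have hGb : ∀ t, |G t| ≤ Mg := by
    intro t
    calc |G t| ≤ ∑ s, |d t s * g s| := Finset.abs_sum_le_sum_abs _ _
      _ ≤ Mg := Finset.sum_le_sum fun s _ => by
          rw [abs_mul, abs_of_nonneg (hd0 t s)]
          exact mul_le_of_le_one_left (abs_nonneg _) (hdle t s)
  -- limit of γ^n f n
  have h0 : Filter.Tendsto (fun n => γ ^ n * f n) Filter.atTop (nhds 0) := by
    have hb : ∀ n, ‖γ ^ n * f n‖ ≤ M * γ ^ n := by
      intro n
      rw [Real.norm_eq_abs, abs_mul, abs_of_nonneg (pow_nonneg hγ0 n), mul_comm]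
      exact mul_le_mul_of_nonneg_right (hfb n) (pow_nonneg hγ0 n)
    have hg : Filter.Tendsto (fun n : ℕ => M * γ ^ n) Filter.atTop (nhds 0) := by
      simpa using (tendsto_pow_atTop_nhds_zero_of_lt_one hγ0 hγ1).const_mul M
    exact squeeze_zero_norm hb hg
  have hpart : Filter.Tendsto (fun n => ∑ t ∈ Finset.range n, γ ^ t * G t)
      Filter.atTop (nhds (f 0)) := by
    have heq : (fun n => ∑ t ∈ Finset.range n, γ ^ t * G t)
        = fun n => f 0 - γ ^ n * f n := by
      funext n
      have := htel n
      linarith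
    rw [heq]
    simpa using tendsto_const_nhds.sub h0
  have hsum : Summable (fun t => γ ^ t * G t) := by
    refine Summable.of_norm_bounded (g := fun t => Mg * γ ^ t)
      ((summable_geometric_of_lt_one hγ0 hγ1).mul_left Mg) fun t => ?_
    rw [Real.norm_eq_abs, abs_mul, abs_of_nonneg (pow_nonneg hγ0 t), mul_comm]
    exact mul_le_mul_of_nonneg_right (hGb t) (pow_nonneg hγ0 t)
  have hts : ∑' t, γ ^ t * G t = f 0 :=
    (hsum.hasSum_iff_tendsto_nat.mpr hpart).tsum_eq
  -- RHS computation
  have hsum_s : ∀ s : S, Summable (fun t : ℕ => γ ^ t * d t s * g s) := by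
    intro s
    refine Summable.of_norm_bounded (g := fun t => |g s| * γ ^ t)
      ((summable_geometric_of_lt_one hγ0 hγ1).mul_left _) fun t => ?_
    rw [Real.norm_eq_abs, abs_mul, abs_mul, abs_of_nonneg (pow_nonneg hγ0 t),
      abs_of_nonneg (hd0 t s)]
    have h1 : γ ^ t * d t s ≤ γ ^ t := mul_le_of_le_one_right (pow_nonneg hγ0 t) (hdle t s)
    calc γ ^ t * d t s * |g s| ≤ γ ^ t * |g s| :=
          mul_le_mul_of_nonneg_right h1 (abs_nonneg _)
      _ = |g s| * γ ^ t := by ring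
  have hRHS : ∑ s, occupancy K μ γ s * g s = (1 - γ) * ∑' t, γ ^ t * G t := by
    calc ∑ s, occupancy K μ γ s * g s
        = ∑ s, (1 - γ) * ∑' t, γ ^ t * d t s * g s := by
          refine Finset.sum_congr rfl fun s _ => ?_
          show occupancy K μ γ s * g s = _
          rw [occupancy, ← hddef, mul_assoc, tsum_mul_right]
      _ = (1 - γ) * ∑ s, ∑' t, γ ^ t * d t s * g s := by rw [Finset.mul_sum]
      _ = (1 - γ) * ∑' t, ∑ s, γ ^ t * d t s * g s := by
          rw [← Summable.tsum_finsetSum (fun s _ => hsum_s s)]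
      _ = (1 - γ) * ∑' t, γ ^ t * G t := by
          congr 1
          refine tsum_congr fun t => ?_
          rw [hGdef, Finset.mul_sum]
          exact Finset.sum_congr rfl fun s _ => by ring
  have hLHS : (∑ s, μ s * V' s) - (∑ s, μ s * V s) = f 0 := by
    show _ = ∑ s, d 0 s * D s
    rw [← Finset.sum_sub_distrib]
    refine Finset.sum_congr rfl fun s _ => ?_
    have hd0s : d 0 s = μ s := rfl
    rw [hd0s, hDdef]
    ring
  have hne : (1 : ℝ) - γ ≠ 0 := by linarith
  rw [hLHS]
  show f 0 = (1 / (1 - γ)) * ∑ s, occupancy K μ γ s * g s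
  rw [hRHS, hts]
  field_simp
end

section
/- Simulation lemma via policy distance: for two stationary policies π, π' on a finite MDP with rewards in [0,1], ‖V^{π'} − V^{π}‖_∞ ≤ (γ/(1-γ)²) · max_s ∑_a |π'(a|s) − π(a|s)| · (1/2) · 2 + (1/(1-γ)) max_s |∑_a (π'(a|s) − π(a|s)) R̄(s,a)|; more simply, ‖V^{π'} − V^{π}‖_∞ ≤ (1/(1-γ)²) · max_s ∑_a |π'(a|s) − π(a|s)|. -/
lemma weighted_abs_le {ι : Type*} [Fintype ι] (w x : ι → ℝ)
    (hw : ∀ i, 0 ≤ w i) (hw1 : ∑ i, w i = 1) (B : ℝ) (hx : ∀ i, |x i| ≤ B) :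
    |∑ i, w i * x i| ≤ B := by
  calc |∑ i, w i * x i| ≤ ∑ i, |w i * x i| := Finset.abs_sum_le_sum_abs _ _
    _ ≤ ∑ i, w i * B := Finset.sum_le_sum fun i _ => by
        rw [abs_mul, abs_of_nonneg (hw i)]
        exact mul_le_mul_of_nonneg_left (hx i) (hw i)
    _ = B := by rw [← Finset.sum_mul, hw1, one_mul]

/-- Simulation lemma via policy distance, for rewards in [0,1]:
‖V^{π'} − V^{π}‖_∞ ≤ (γ/(1-γ)²)·max_s ∑_a |π'−π|·(1/2)·2 + (1/(1-γ))·max_s |∑_a (π'−π) Q^π|,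
and more simply ‖V^{π'} − V^{π}‖_∞ ≤ (1/(1-γ)²)·max_s ∑_a |π'(a|s) − π(a|s)|. -/
theorem simulation_lemma_policy_distance
    {S A : Type*} [Fintype S] [Fintype A] [Nonempty S] [Nonempty A]
    (P : S → A → S → ℝ) (R : S → A → ℝ) (γ : ℝ)
    (hγ0 : 0 ≤ γ) (hγ1 : γ < 1)
    (hP0 : ∀ s a s', 0 ≤ P s a s') (hP1 : ∀ s a, ∑ s', P s a s' = 1)
    (hR0 : ∀ s a, 0 ≤ R s a) (hR1 : ∀ s a, R s a ≤ 1)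
    (π : S → A → ℝ) (hπ0 : ∀ s a, 0 ≤ π s a) (hπ1 : ∀ s, ∑ a, π s a = 1)
    (π' : S → A → ℝ) (hπ'0 : ∀ s a, 0 ≤ π' s a) (hπ'1 : ∀ s, ∑ a, π' s a = 1)
    (V V' : S → ℝ)
    (hV : ∀ s, V s = ∑ a, π s a * (R s a + γ * ∑ s', P s a s' * V s'))
    (hV' : ∀ s, V' s = ∑ a, π' s a * (R s a + γ * ∑ s', P s a s' * V' s'))
    (Q : S → A → ℝ) (hQ : ∀ s a, Q s a = R s a + γ * ∑ s', P s a s' * V s') :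
    (∀ s, |V' s - V s| ≤
      γ / (1 - γ) ^ 2 *
          (Finset.univ.sup' Finset.univ_nonempty fun s => ∑ a, |π' s a - π s a|) * (1 / 2) * 2 +
        1 / (1 - γ) *
          (Finset.univ.sup' Finset.univ_nonempty fun s => |∑ a, (π' s a - π s a) * Q s a|)) ∧
    (∀ s, |V' s - V s| ≤
      1 / (1 - γ) ^ 2 *
        (Finset.univ.sup' Finset.univ_nonempty fun s => ∑ a, |π' s a - π s a|)) := by
  have h1γ : (0:ℝ) < 1 - γ := by linarith
  set D := Finset.univ.sup' Finset.univ_nonempty fun s => ∑ a, |π' s a - π s a| with hDdef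
  set M := Finset.univ.sup' Finset.univ_nonempty fun s => |∑ a, (π' s a - π s a) * Q s a|
    with hMdef
  set Δ := Finset.univ.sup' Finset.univ_nonempty fun s => |V' s - V s| with hΔdef
  -- bound on V
  set B := Finset.univ.sup' Finset.univ_nonempty fun s => |V s| with hBdef
  have hVB : ∀ s, |V s| ≤ B := fun s => Finset.le_sup' (fun s => |V s|) (Finset.mem_univ s)
  have hB1 : B ≤ 1 + γ * B := by
    apply Finset.sup'_le
    intro s _
    rw [hV s]
    apply weighted_abs_le _ _ (hπ0 s) (hπ1 s)
    intro a
    have hPV : |∑ s', P s a s' * V s'| ≤ B :=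
      weighted_abs_le _ _ (hP0 s a) (hP1 s a) B hVB
    have := abs_add_le (R s a) (γ * ∑ s', P s a s' * V s')
    have h1 : |R s a| ≤ 1 := abs_le.2 ⟨by linarith [hR0 s a], hR1 s a⟩
    have h2 : |γ * ∑ s', P s a s' * V s'| ≤ γ * B := by
      rw [abs_mul, abs_of_nonneg hγ0]
      exact mul_le_mul_of_nonneg_left hPV hγ0
    linarith
  have hBle : B ≤ 1 / (1 - γ) := by
    rw [le_div_iff₀ h1γ]; nlinarith
  have hQbound : ∀ s a, |Q s a| ≤ 1 / (1 - γ) := by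
    intro s a
    rw [hQ s a]
    have hPV : |∑ s', P s a s' * V s'| ≤ B :=
      weighted_abs_le _ _ (hP0 s a) (hP1 s a) B hVB
    have h1 : |R s a| ≤ 1 := abs_le.2 ⟨by linarith [hR0 s a], hR1 s a⟩
    have h2 : |γ * ∑ s', P s a s' * V s'| ≤ γ * B := by
      rw [abs_mul, abs_of_nonneg hγ0]
      exact mul_le_mul_of_nonneg_left hPV hγ0
    have := abs_add_le (R s a) (γ * ∑ s', P s a s' * V s')
    have hgB : γ * B ≤ γ / (1 - γ) := by
      rw [div_eq_mul_inv]
      have : B ≤ (1 - γ)⁻¹ := by rwa [one_div] at hBle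
      exact mul_le_mul_of_nonneg_left this hγ0
    have : (1:ℝ) + γ / (1 - γ) = 1 / (1 - γ) := by field_simp; ring
    linarith
  -- decomposition
  have hΔV : ∀ s, |V' s - V s| ≤ Δ := fun s => Finset.le_sup' (fun s => |V' s - V s|) (Finset.mem_univ s)
  have hMle : ∀ s, |∑ a, (π' s a - π s a) * Q s a| ≤ M :=
    fun s => Finset.le_sup' (fun s => |∑ a, (π' s a - π s a) * Q s a|) (Finset.mem_univ s)
  have hdec : ∀ s, V' s - V s =
      (∑ a, π' s a * (γ * ∑ s', P s a s' * (V' s' - V s'))) +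
        ∑ a, (π' s a - π s a) * Q s a := by
    intro s
    conv_lhs => rw [hV' s, hV s]
    rw [← Finset.sum_sub_distrib, ← Finset.sum_add_distrib]
    apply Finset.sum_congr rfl
    intro a _
    rw [hQ s a]
    have : ∑ s', P s a s' * (V' s' - V s') =
        (∑ s', P s a s' * V' s') - ∑ s', P s a s' * V s' := by
      rw [← Finset.sum_sub_distrib]
      exact Finset.sum_congr rfl fun s' _ => by ring
    rw [this]; ring
  have hcontr : ∀ s, |V' s - V s| ≤ γ * Δ + M := by
    intro s
    rw [hdec s]
    have h1 : |∑ a, π' s a * (γ * ∑ s', P s a s' * (V' s' - V s'))| ≤ γ * Δ := by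
      apply weighted_abs_le _ _ (hπ'0 s) (hπ'1 s)
      intro a
      rw [abs_mul, abs_of_nonneg hγ0]
      exact mul_le_mul_of_nonneg_left
        (weighted_abs_le _ _ (hP0 s a) (hP1 s a) Δ hΔV) hγ0
    have := abs_add_le (∑ a, π' s a * (γ * ∑ s', P s a s' * (V' s' - V s')))
      (∑ a, (π' s a - π s a) * Q s a)
    linarith [hMle s]
  have hΔ2 : Δ ≤ γ * Δ + M := Finset.sup'_le _ _ fun s _ => hcontr s
  have hΔ3 : Δ ≤ M / (1 - γ) := by rw [le_div_iff₀ h1γ]; nlinarith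
  have hD0 : 0 ≤ D := by
    obtain ⟨s⟩ := ‹Nonempty S›
    refine le_trans ?_ (Finset.le_sup' (fun s => ∑ a, |π' s a - π s a|) (Finset.mem_univ s))
    exact Finset.sum_nonneg fun a _ => abs_nonneg _
  have hMD : M ≤ D * (1 / (1 - γ)) := by
    apply Finset.sup'_le
    intro s _
    calc |∑ a, (π' s a - π s a) * Q s a| ≤ ∑ a, |(π' s a - π s a) * Q s a| :=
          Finset.abs_sum_le_sum_abs _ _
      _ ≤ ∑ a, |π' s a - π s a| * (1 / (1 - γ)) := Finset.sum_le_sum fun a _ => by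
          rw [abs_mul]
          exact mul_le_mul_of_nonneg_left (hQbound s a) (abs_nonneg _)
      _ = (∑ a, |π' s a - π s a|) * (1 / (1 - γ)) := (Finset.sum_mul _ _ _).symm
      _ ≤ D * (1 / (1 - γ)) := by
          apply mul_le_mul_of_nonneg_right _ (by positivity)
          exact Finset.le_sup' (fun s => ∑ a, |π' s a - π s a|) (Finset.mem_univ s)
  constructor
  · intro s
    have h1 : 0 ≤ γ / (1 - γ) ^ 2 * D * (1 / 2) * 2 := by positivity
    have h2 : |V' s - V s| ≤ 1 / (1 - γ) * M := by
      have := hΔV s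
      rw [one_div, inv_mul_eq_div]
      linarith [hΔ3]
    linarith
  · intro s
    have h2 : M / (1 - γ) ≤ 1 / (1 - γ) ^ 2 * D := by
      rw [div_le_iff₀ h1γ]
      have : 1 / (1 - γ) ^ 2 * D * (1 - γ) = D * (1 / (1 - γ)) := by
        field_simp
      rw [this]; exact hMD
    linarith [hΔV s, hΔ3]
end

section
/- Performance difference lower bound (adaptation of Pirotta et al. Corollary 3.6 with worst-case Q bound): for any two stationary policies π_I and π_E on a finite MDP with rewards in [0,1] and any starting distribution μ, J_μ^{π_I} − J_μ^{π_E} ≥ (1/(1-γ)) ∑_s d_μ^{π_E}(s) ∑_a π_I(a|s) A^{π_E}(s,a) − (γ/(2(1-γ)³)) · (max_s ∑_a |π_I(a|s) − π_E(a|s)|)². -/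
section helpers
variable {S : Type*} [Fintype S] (K : S → S → ℝ) (μ : S → ℝ)

variable {S : Type*} [Fintype S] (K : S → S → ℝ) (μ : S → ℝ)

lemma stateDist_nonneg (hK0 : ∀ s s', 0 ≤ K s s') (hμ0 : ∀ s, 0 ≤ μ s) :
    ∀ t s, 0 ≤ stateDist K μ t s := by
  intro t
  induction t with
  | zero => exact hμ0
  | succ t ih =>
    intro s'
    exact Finset.sum_nonneg fun s _ => mul_nonneg (ih s) (hK0 s s')

lemma stateDist_sum_one (hK1 : ∀ s, ∑ s', K s s' = 1) (hμ1 : ∑ s, μ s = 1) :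
    ∀ t, ∑ s, stateDist K μ t s = 1 := by
  intro t
  induction t with
  | zero => exact hμ1
  | succ t ih =>
    show ∑ s', ∑ s, stateDist K μ t s * K s s' = 1
    rw [Finset.sum_comm]
    simp_rw [← Finset.mul_sum, hK1, mul_one]
    exact ih

lemma stateDist_dot_step (g : S → ℝ) (t : ℕ) :
    ∑ s, stateDist K μ t s * (∑ s', K s s' * g s')
      = ∑ s', stateDist K μ (t + 1) s' * g s' := by
  show _ = ∑ s', (∑ s, stateDist K μ t s * K s s') * g s'
  simp_rw [Finset.mul_sum, Finset.sum_mul]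
  rw [Finset.sum_comm]
  congr 1; ext s'; congr 1; ext s; ring

lemma stateDist_dot_abs_le (hK0 : ∀ s s', 0 ≤ K s s') (hK1 : ∀ s, ∑ s', K s s' = 1)
    (hμ0 : ∀ s, 0 ≤ μ s) (hμ1 : ∑ s, μ s = 1)
    (h : S → ℝ) (C : ℝ) (hC : ∀ s, |h s| ≤ C) (t : ℕ) :
    |∑ s, stateDist K μ t s * h s| ≤ C := by
  calc |∑ s, stateDist K μ t s * h s| ≤ ∑ s, |stateDist K μ t s * h s| :=
        Finset.abs_sum_le_sum_abs _ _
    _ ≤ ∑ s, stateDist K μ t s * C := by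
        apply Finset.sum_le_sum
        intro s _
        rw [abs_mul, abs_of_nonneg (stateDist_nonneg K μ hK0 hμ0 t s)]
        exact mul_le_mul_of_nonneg_left (hC s) (stateDist_nonneg K μ hK0 hμ0 t s)
    _ = C := by rw [← Finset.sum_mul, stateDist_sum_one K μ hK1 hμ1, one_mul]

lemma telescope (γ : ℝ) (f g : S → ℝ)
    (hg : ∀ s, g s = f s + γ * ∑ s', K s s' * g s') (n : ℕ) :
    ∑ s, μ s * g s
      = (∑ k ∈ Finset.range n, γ ^ k * ∑ s, stateDist K μ k s * f s)
        + γ ^ n * ∑ s, stateDist K μ n s * g s := by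
  induction n with
  | zero =>
    simp only [Finset.range_zero, Finset.sum_empty, pow_zero, one_mul, zero_add]
    rfl
  | succ n ih =>
    rw [ih, Finset.sum_range_succ]
    have : ∑ s, stateDist K μ n s * g s
        = (∑ s, stateDist K μ n s * f s) + γ * ∑ s', stateDist K μ (n+1) s' * g s' := by
      rw [← stateDist_dot_step K μ g n]
      have e1 : ∀ s, stateDist K μ n s * g s
          = stateDist K μ n s * f s
            + γ * (stateDist K μ n s * (∑ s', K s s' * g s')) := by
        intro s; rw [hg s]; ring
      simp_rw [e1, Finset.sum_add_distrib, ← Finset.mul_sum]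
    rw [this]; ring

/-- Neumann-series representation of μ·g when g = f + γ K g. -/
lemma neumann (γ : ℝ) (hγ0 : 0 ≤ γ) (hγ1 : γ < 1)
    (hK0 : ∀ s s', 0 ≤ K s s') (hK1 : ∀ s, ∑ s', K s s' = 1)
    (hμ0 : ∀ s, 0 ≤ μ s) (hμ1 : ∑ s, μ s = 1)
    (f g : S → ℝ) (hg : ∀ s, g s = f s + γ * ∑ s', K s s' * g s') :
    HasSum (fun k => γ ^ k * ∑ s, stateDist K μ k s * f s) (∑ s, μ s * g s) := by
  have hdot : ∀ (h : S → ℝ) (C : ℝ), (∀ s, |h s| ≤ C) → ∀ t,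
      |∑ s, stateDist K μ t s * h s| ≤ C :=
    fun h C hC t => stateDist_dot_abs_le K μ hK0 hK1 hμ0 hμ1 h C hC t
  obtain ⟨Cf, hCf⟩ : ∃ C, ∀ s, |f s| ≤ C :=
    ⟨∑ s, |f s|, fun s => Finset.single_le_sum (fun s _ => abs_nonneg (f s)) (Finset.mem_univ s)⟩
  obtain ⟨Cg, hCg⟩ : ∃ C, ∀ s, |g s| ≤ C :=
    ⟨∑ s, |g s|, fun s => Finset.single_le_sum (fun s _ => abs_nonneg (g s)) (Finset.mem_univ s)⟩
  have hsumm : Summable (fun k => γ ^ k * ∑ s, stateDist K μ k s * f s) := by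
    apply Summable.of_norm_bounded (g := fun k => Cf * γ ^ k)
      ((summable_geometric_of_lt_one hγ0 hγ1).mul_left Cf)
    intro k
    rw [Real.norm_eq_abs, abs_mul, abs_pow, abs_of_nonneg hγ0]
    calc γ ^ k * |∑ s, stateDist K μ k s * f s| ≤ γ ^ k * Cf := by
          exact mul_le_mul_of_nonneg_left (hdot f Cf hCf k) (pow_nonneg hγ0 k)
      _ = Cf * γ ^ k := mul_comm _ _
  have hlim : Filter.Tendsto
      (fun n => ∑ k ∈ Finset.range n, γ ^ k * ∑ s, stateDist K μ k s * f s)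
      Filter.atTop (nhds (∑ s, μ s * g s)) := by
    have heq : ∀ n, ∑ k ∈ Finset.range n, γ ^ k * ∑ s, stateDist K μ k s * f s
        = (∑ s, μ s * g s) - γ ^ n * ∑ s, stateDist K μ n s * g s := by
      intro n; rw [telescope K μ γ f g hg n]; ring
    simp_rw [heq]
    have h0 : Filter.Tendsto (fun n : ℕ => Cg * γ ^ n) Filter.atTop (nhds 0) := by
      simpa using (tendsto_pow_atTop_nhds_zero_of_lt_one hγ0 hγ1).const_mul Cg
    have : Filter.Tendsto (fun n => γ ^ n * ∑ s, stateDist K μ n s * g s)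
        Filter.atTop (nhds 0) := by
      apply squeeze_zero_norm _ h0
      intro n
      rw [Real.norm_eq_abs, abs_mul, abs_pow, abs_of_nonneg hγ0, mul_comm Cg]
      exact mul_le_mul_of_nonneg_left (hdot g Cg hCg n) (pow_nonneg hγ0 n)
    simpa using Filter.Tendsto.sub (tendsto_const_nhds) this
  have := hsumm.hasSum.tendsto_sum_nat
  exact (hsumm.hasSum_iff_tendsto_nat).2 hlim

end helpers

/-- Performance difference lower bound (Pirotta et al., Cor. 3.6 with
worst-case Q bound): J_μ^{π_I} − J_μ^{π_E} ≥
(1/(1-γ)) ∑_s d_μ^{π_E}(s) ∑_a π_I(a|s) A^{π_E}(s,a)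
− (γ/(2(1-γ)³)) (max_s ∑_a |π_I(a|s) − π_E(a|s)|)². -/
theorem performance_difference_lower_bound
    {S A : Type*} [Fintype S] [Fintype A] [Nonempty S] [Nonempty A]
    (P : S → A → S → ℝ) (R : S → A → ℝ) (γ : ℝ)
    (hγ0 : 0 ≤ γ) (hγ1 : γ < 1)
    (hP0 : ∀ s a s', 0 ≤ P s a s') (hP1 : ∀ s a, ∑ s', P s a s' = 1)
    (hR0 : ∀ s a, 0 ≤ R s a) (hR1 : ∀ s a, R s a ≤ 1)
    (πI πE : S → A → ℝ)
    (hπI0 : ∀ s a, 0 ≤ πI s a) (hπI1 : ∀ s, ∑ a, πI s a = 1)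
    (hπE0 : ∀ s a, 0 ≤ πE s a) (hπE1 : ∀ s, ∑ a, πE s a = 1)
    (μ : S → ℝ) (hμ0 : ∀ s, 0 ≤ μ s) (hμ1 : ∑ s, μ s = 1)
    (VI VE : S → ℝ)
    (hVI : ∀ s, VI s = ∑ a, πI s a * (R s a + γ * ∑ s', P s a s' * VI s'))
    (hVE : ∀ s, VE s = ∑ a, πE s a * (R s a + γ * ∑ s', P s a s' * VE s'))
    (QE : S → A → ℝ) (hQE : ∀ s a, QE s a = R s a + γ * ∑ s', P s a s' * VE s')
    (AdvE : S → A → ℝ) (hAdvE : ∀ s a, AdvE s a = QE s a - VE s) :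
    (∑ s, μ s * VI s) - (∑ s, μ s * VE s) ≥
      (1 / (1 - γ)) *
          (∑ s, occupancy (inducedKernel P πE) μ γ s * ∑ a, πI s a * AdvE s a) -
        (γ / (2 * (1 - γ) ^ 3)) *
          (Finset.univ.sup' Finset.univ_nonempty fun s => ∑ a, |πI s a - πE s a|) ^ 2 := by
  have h1γ : (0:ℝ) < 1 - γ := by linarith
  -- the policy-distance quantity
  set ε : ℝ := Finset.univ.sup' Finset.univ_nonempty (fun s => ∑ a, |πI s a - πE s a|)
    with hεdef
  have hε : ∀ s : S, ∑ a, |πI s a - πE s a| ≤ ε := by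
    intro s
    rw [hεdef]
    exact Finset.le_sup' (fun s : S => ∑ a, |πI s a - πE s a|) (Finset.mem_univ s)
  have hε0 : 0 ≤ ε := by
    obtain ⟨s⟩ := (inferInstance : Nonempty S)
    exact le_trans (Finset.sum_nonneg fun a _ => abs_nonneg _) (hε s)
  -- kernel properties
  have hKI0 : ∀ s s', 0 ≤ inducedKernel P πI s s' := fun s s' =>
    Finset.sum_nonneg fun a _ => mul_nonneg (hπI0 s a) (hP0 s a s')
  have hKE0 : ∀ s s', 0 ≤ inducedKernel P πE s s' := fun s s' =>
    Finset.sum_nonneg fun a _ => mul_nonneg (hπE0 s a) (hP0 s a s')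
  have hKI1 : ∀ s, ∑ s', inducedKernel P πI s s' = 1 := by
    intro s
    unfold inducedKernel
    rw [Finset.sum_comm]
    simp_rw [← Finset.mul_sum, hP1, mul_one]
    exact hπI1 s
  have hKE1 : ∀ s, ∑ s', inducedKernel P πE s s' = 1 := by
    intro s
    unfold inducedKernel
    rw [Finset.sum_comm]
    simp_rw [← Finset.mul_sum, hP1, mul_one]
    exact hπE1 s
  -- bounds on VE
  obtain ⟨smax, -, hsmax⟩ := Finset.exists_max_image Finset.univ VE Finset.univ_nonempty
  have hVEub : ∀ s, VE s ≤ 1 / (1 - γ) := by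
    have hM : VE smax ≤ 1 / (1 - γ) := by
      have h1 : VE smax ≤ 1 + γ * VE smax := by
        calc VE smax = ∑ a, πE smax a * (R smax a + γ * ∑ s', P smax a s' * VE s') := hVE smax
          _ ≤ ∑ a, πE smax a * (1 + γ * VE smax) := by
              apply Finset.sum_le_sum; intro a _
              apply mul_le_mul_of_nonneg_left _ (hπE0 _ a)
              have h2 : ∑ s', P smax a s' * VE s' ≤ VE smax := by
                calc ∑ s', P smax a s' * VE s' ≤ ∑ s', P smax a s' * VE smax :=
                      Finset.sum_le_sum fun s' _ =>
                        mul_le_mul_of_nonneg_left (hsmax s' (Finset.mem_univ s')) (hP0 _ a s')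
                  _ = VE smax := by rw [← Finset.sum_mul, hP1, one_mul]
              have h3 := mul_le_mul_of_nonneg_left h2 hγ0
              linarith [hR1 smax a]
          _ = 1 + γ * VE smax := by rw [← Finset.sum_mul, hπE1, one_mul]
      rw [le_div_iff₀ h1γ]
      nlinarith
    intro s; exact le_trans (hsmax s (Finset.mem_univ s)) hM
  obtain ⟨smin, -, hsmin⟩ := Finset.exists_min_image Finset.univ VE Finset.univ_nonempty
  have hVElb : ∀ s, 0 ≤ VE s := by
    have hm : 0 ≤ VE smin := by
      have h1 : γ * VE smin ≤ VE smin := by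
        calc γ * VE smin = ∑ a, πE smin a * (γ * VE smin) := by
              rw [← Finset.sum_mul, hπE1, one_mul]
          _ ≤ ∑ a, πE smin a * (R smin a + γ * ∑ s', P smin a s' * VE s') := by
              apply Finset.sum_le_sum; intro a _
              apply mul_le_mul_of_nonneg_left _ (hπE0 _ a)
              have h2 : VE smin ≤ ∑ s', P smin a s' * VE s' := by
                calc VE smin = ∑ s', P smin a s' * VE smin := by
                      rw [← Finset.sum_mul, hP1, one_mul]
                  _ ≤ ∑ s', P smin a s' * VE s' :=
                      Finset.sum_le_sum fun s' _ =>
                        mul_le_mul_of_nonneg_left (hsmin s' (Finset.mem_univ s')) (hP0 _ a s')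
              have h3 := mul_le_mul_of_nonneg_left h2 hγ0
              linarith [hR0 smin a]
          _ = VE smin := (hVE smin).symm
      nlinarith
    intro s; exact le_trans hm (hsmin s (Finset.mem_univ s))
  -- bounds on QE
  have hQElb : ∀ s a, 0 ≤ QE s a := by
    intro s a; rw [hQE]
    have h2 : 0 ≤ ∑ s', P s a s' * VE s' :=
      Finset.sum_nonneg fun s' _ => mul_nonneg (hP0 s a s') (hVElb s')
    have h3 := mul_nonneg hγ0 h2
    linarith [hR0 s a]
  have hQEub : ∀ s a, QE s a ≤ 1 / (1 - γ) := by
    intro s a; rw [hQE]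
    have h2 : ∑ s', P s a s' * VE s' ≤ 1 / (1 - γ) := by
      calc ∑ s', P s a s' * VE s' ≤ ∑ s', P s a s' * (1 / (1 - γ)) :=
            Finset.sum_le_sum fun s' _ => mul_le_mul_of_nonneg_left (hVEub s') (hP0 s a s')
        _ = 1 / (1 - γ) := by rw [← Finset.sum_mul, hP1, one_mul]
    have h3 := mul_le_mul_of_nonneg_left h2 hγ0
    have h4 : 1 + γ * (1 / (1 - γ)) = 1 / (1 - γ) := by field_simp; ring
    linarith [hR1 s a]
  -- rewriting and bounding the advantage average
  have hAbar_eq : ∀ s, ∑ a, πI s a * AdvE s a = ∑ a, (πI s a - πE s a) * QE s a := by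
    intro s
    have hVEQ : ∑ a, πE s a * QE s a = VE s := by
      simp_rw [hQE]; exact (hVE s).symm
    simp_rw [hAdvE, mul_sub, sub_mul]
    rw [Finset.sum_sub_distrib, Finset.sum_sub_distrib, ← Finset.sum_mul, hπI1, one_mul, hVEQ]
  have hAbar_bd : ∀ s, |∑ a, πI s a * AdvE s a| ≤ ε * (1 / (2 * (1 - γ))) := by
    intro s
    rw [hAbar_eq s]
    have hzero : ∑ a, (πI s a - πE s a) = 0 := by
      rw [Finset.sum_sub_distrib, hπI1, hπE1, sub_self]
    have heq : ∑ a, (πI s a - πE s a) * QE s a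
        = ∑ a, (πI s a - πE s a) * (QE s a - 1 / (2 * (1 - γ))) := by
      simp_rw [mul_sub]
      rw [Finset.sum_sub_distrib, ← Finset.sum_mul, hzero, zero_mul, sub_zero]
    rw [heq]
    have hhalf : 1 / (2 * (1 - γ)) + 1 / (2 * (1 - γ)) = 1 / (1 - γ) := by
      rw [← add_div, show (1:ℝ) + 1 = 2 by norm_num, eq_div_iff (ne_of_gt h1γ)]
      field_simp
    calc |∑ a, (πI s a - πE s a) * (QE s a - 1 / (2 * (1 - γ)))|
        ≤ ∑ a, |(πI s a - πE s a) * (QE s a - 1 / (2 * (1 - γ)))| :=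
          Finset.abs_sum_le_sum_abs _ _
      _ ≤ ∑ a, |πI s a - πE s a| * (1 / (2 * (1 - γ))) := by
          apply Finset.sum_le_sum; intro a _
          rw [abs_mul]
          apply mul_le_mul_of_nonneg_left _ (abs_nonneg _)
          rw [abs_le]
          constructor
          · linarith [hQElb s a]
          · linarith [hQEub s a]
      _ = (∑ a, |πI s a - πE s a|) * (1 / (2 * (1 - γ))) := (Finset.sum_mul _ _ _).symm
      _ ≤ ε * (1 / (2 * (1 - γ))) :=
          mul_le_mul_of_nonneg_right (hε s) (by positivity)
  -- TV distance between the two induced kernels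
  have hKdiff : ∀ s, ∑ s', |inducedKernel P πI s s' - inducedKernel P πE s s'| ≤ ε := by
    intro s
    have e1 : ∀ s', |inducedKernel P πI s s' - inducedKernel P πE s s'|
        = |∑ a, (πI s a - πE s a) * P s a s'| := by
      intro s'
      unfold inducedKernel
      rw [← Finset.sum_sub_distrib]
      simp_rw [sub_mul]
    calc ∑ s', |inducedKernel P πI s s' - inducedKernel P πE s s'|
        = ∑ s', |∑ a, (πI s a - πE s a) * P s a s'| := by simp_rw [e1]
      _ ≤ ∑ s', ∑ a, |(πI s a - πE s a) * P s a s'| :=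
          Finset.sum_le_sum fun s' _ => Finset.abs_sum_le_sum_abs _ _
      _ = ∑ a, ∑ s', |πI s a - πE s a| * P s a s' := by
          rw [Finset.sum_comm]
          apply Finset.sum_congr rfl; intro a _
          apply Finset.sum_congr rfl; intro s' _
          rw [abs_mul, abs_of_nonneg (hP0 s a s')]
      _ = ∑ a, |πI s a - πE s a| := by
          apply Finset.sum_congr rfl; intro a _
          rw [← Finset.mul_sum, hP1, mul_one]
      _ ≤ ε := hε s
  -- L1 distance between state distributions grows at most linearly
  have hD : ∀ n : ℕ, ∑ s, |stateDist (inducedKernel P πI) μ n s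
      - stateDist (inducedKernel P πE) μ n s| ≤ n * ε := by
    intro n
    induction n with
    | zero => simp [stateDist]
    | succ n ih =>
      have hterm : ∀ s s', |stateDist (inducedKernel P πI) μ n s * inducedKernel P πI s s'
            - stateDist (inducedKernel P πE) μ n s * inducedKernel P πE s s'|
          ≤ |stateDist (inducedKernel P πI) μ n s - stateDist (inducedKernel P πE) μ n s|
              * inducedKernel P πI s s'
            + stateDist (inducedKernel P πE) μ n s
              * |inducedKernel P πI s s' - inducedKernel P πE s s'| := by
        intro s s'
        have e : stateDist (inducedKernel P πI) μ n s * inducedKernel P πI s s'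
            - stateDist (inducedKernel P πE) μ n s * inducedKernel P πE s s'
            = (stateDist (inducedKernel P πI) μ n s - stateDist (inducedKernel P πE) μ n s)
                * inducedKernel P πI s s'
              + stateDist (inducedKernel P πE) μ n s
                * (inducedKernel P πI s s' - inducedKernel P πE s s') := by ring
        rw [e]
        calc _ ≤ |(stateDist (inducedKernel P πI) μ n s - stateDist (inducedKernel P πE) μ n s)
                * inducedKernel P πI s s'|
              + |stateDist (inducedKernel P πE) μ n s
                * (inducedKernel P πI s s' - inducedKernel P πE s s')| := abs_add_le _ _
          _ = _ := by
              rw [abs_mul, abs_mul, abs_of_nonneg (hKI0 s s'),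
                abs_of_nonneg (stateDist_nonneg _ μ hKE0 hμ0 n s)]
      calc ∑ s', |stateDist (inducedKernel P πI) μ (n+1) s'
            - stateDist (inducedKernel P πE) μ (n+1) s'|
          = ∑ s', |∑ s, (stateDist (inducedKernel P πI) μ n s * inducedKernel P πI s s'
              - stateDist (inducedKernel P πE) μ n s * inducedKernel P πE s s')| := by
            apply Finset.sum_congr rfl; intro s' _
            rw [show stateDist (inducedKernel P πI) μ (n+1) s'
                = ∑ s, stateDist (inducedKernel P πI) μ n s * inducedKernel P πI s s' from rfl,
              show stateDist (inducedKernel P πE) μ (n+1) s'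
                = ∑ s, stateDist (inducedKernel P πE) μ n s * inducedKernel P πE s s' from rfl,
              ← Finset.sum_sub_distrib]
        _ ≤ ∑ s', ∑ s,
              (|stateDist (inducedKernel P πI) μ n s - stateDist (inducedKernel P πE) μ n s|
                  * inducedKernel P πI s s'
                + stateDist (inducedKernel P πE) μ n s
                  * |inducedKernel P πI s s' - inducedKernel P πE s s'|) := by
            apply Finset.sum_le_sum; intro s' _
            exact le_trans (Finset.abs_sum_le_sum_abs _ _)
              (Finset.sum_le_sum fun s _ => hterm s s')
        _ = (∑ s, |stateDist (inducedKernel P πI) μ n s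
              - stateDist (inducedKernel P πE) μ n s| * ∑ s', inducedKernel P πI s s')
            + ∑ s, stateDist (inducedKernel P πE) μ n s
              * ∑ s', |inducedKernel P πI s s' - inducedKernel P πE s s'| := by
            rw [Finset.sum_comm]
            simp_rw [Finset.sum_add_distrib, ← Finset.mul_sum]
        _ ≤ (∑ s, |stateDist (inducedKernel P πI) μ n s
              - stateDist (inducedKernel P πE) μ n s|)
            + ∑ s, stateDist (inducedKernel P πE) μ n s * ε := by
            apply add_le_add
            · apply le_of_eq
              apply Finset.sum_congr rfl; intro s _
              rw [hKI1 s, mul_one]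
            · apply Finset.sum_le_sum; intro s _
              exact mul_le_mul_of_nonneg_left (hKdiff s)
                (stateDist_nonneg _ μ hKE0 hμ0 n s)
        _ ≤ n * ε + 1 * ε := by
            apply add_le_add ih
            rw [← Finset.sum_mul, stateDist_sum_one _ μ hKE1 hμ1]
        _ = (n + 1 : ℕ) * ε := by push_cast; ring
  -- Bellman-style equation for the value difference
  have hΔ : ∀ s, VI s - VE s = (∑ a, πI s a * AdvE s a)
      + γ * ∑ s', inducedKernel P πI s s' * (VI s' - VE s') := by
    intro s
    have h1 : ∑ s', inducedKernel P πI s s' * (VI s' - VE s')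
        = ∑ a, πI s a * ∑ s', P s a s' * (VI s' - VE s') := by
      unfold inducedKernel
      simp_rw [Finset.sum_mul, Finset.mul_sum]
      rw [Finset.sum_comm]
      apply Finset.sum_congr rfl; intro a _
      apply Finset.sum_congr rfl; intro s' _
      ring
    rw [h1]
    have h2 : ∑ a, πI s a * AdvE s a
        = (∑ a, πI s a * (R s a + γ * ∑ s', P s a s' * VE s')) - VE s := by
      simp_rw [hAdvE, hQE, mul_sub]
      rw [Finset.sum_sub_distrib, ← Finset.sum_mul, hπI1, one_mul]
    rw [h2, hVI s]
    have h3 : ∀ a, πI s a * (R s a + γ * ∑ s', P s a s' * VI s')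
        = πI s a * (R s a + γ * ∑ s', P s a s' * VE s')
          + γ * (πI s a * ∑ s', P s a s' * (VI s' - VE s')) := by
      intro a
      simp_rw [mul_sub]
      rw [Finset.sum_sub_distrib]
      ring
    simp_rw [h3, Finset.sum_add_distrib, ← Finset.mul_sum]
    ring
  -- Neumann series for the performance difference
  have hIsum : HasSum
      (fun k => γ ^ k * ∑ s, stateDist (inducedKernel P πI) μ k s * ∑ a, πI s a * AdvE s a)
      ((∑ s, μ s * VI s) - ∑ s, μ s * VE s) := by
    have := neumann (inducedKernel P πI) μ γ hγ0 hγ1 hKI0 hKI1 hμ0 hμ1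
      (fun s => ∑ a, πI s a * AdvE s a) (fun s => VI s - VE s) hΔ
    have he : ∑ s, μ s * (VI s - VE s) = (∑ s, μ s * VI s) - ∑ s, μ s * VE s := by
      simp_rw [mul_sub]
      exact Finset.sum_sub_distrib _ _
    rwa [he] at this
  -- summability facts
  have hdotE : ∀ k, |∑ s, stateDist (inducedKernel P πE) μ k s * ∑ a, πI s a * AdvE s a|
      ≤ ε * (1 / (2 * (1 - γ))) := fun k =>
    stateDist_dot_abs_le _ μ hKE0 hKE1 hμ0 hμ1 _ _ hAbar_bd k
  have hEsummable : Summable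
      (fun k => γ ^ k * ∑ s, stateDist (inducedKernel P πE) μ k s * ∑ a, πI s a * AdvE s a) := by
    apply Summable.of_norm_bounded (g := fun k => (ε * (1 / (2 * (1 - γ)))) * γ ^ k)
      ((summable_geometric_of_lt_one hγ0 hγ1).mul_left _)
    intro k
    rw [Real.norm_eq_abs, abs_mul, abs_pow, abs_of_nonneg hγ0, mul_comm]
    exact mul_le_mul_of_nonneg_right (hdotE k) (pow_nonneg hγ0 k)
  -- occupancy identity
  have hocc : (1 / (1 - γ)) *
      (∑ s, occupancy (inducedKernel P πE) μ γ s * ∑ a, πI s a * AdvE s a)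
      = ∑' k : ℕ, γ ^ k * ∑ s, stateDist (inducedKernel P πE) μ k s
          * ∑ a, πI s a * AdvE s a := by
    have hsummE : ∀ s : S, Summable
        (fun t : ℕ => γ ^ t * stateDist (inducedKernel P πE) μ t s) := by
      intro s
      apply Summable.of_norm_bounded (g := fun t => γ ^ t) (summable_geometric_of_lt_one hγ0 hγ1)
      intro t
      rw [Real.norm_eq_abs, abs_mul, abs_pow, abs_of_nonneg hγ0,
        abs_of_nonneg (stateDist_nonneg _ μ hKE0 hμ0 t s)]
      have hle1 : stateDist (inducedKernel P πE) μ t s ≤ 1 := by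
        have := Finset.single_le_sum
          (fun s' _ => stateDist_nonneg _ μ hKE0 hμ0 t s') (Finset.mem_univ s)
        rwa [stateDist_sum_one _ μ hKE1 hμ1 t] at this
      calc γ ^ t * stateDist (inducedKernel P πE) μ t s ≤ γ ^ t * 1 :=
            mul_le_mul_of_nonneg_left hle1 (pow_nonneg hγ0 t)
        _ = γ ^ t := mul_one _
    have e1 : ∀ s : S, occupancy (inducedKernel P πE) μ γ s * (∑ a, πI s a * AdvE s a)
        = (1 - γ) * ∑' t : ℕ, γ ^ t * stateDist (inducedKernel P πE) μ t s
            * ∑ a, πI s a * AdvE s a := by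
      intro s
      unfold occupancy
      rw [mul_assoc]
      congr 1
      rw [← tsum_mul_right]
    have e2 : ∑ s, occupancy (inducedKernel P πE) μ γ s * ∑ a, πI s a * AdvE s a
        = (1 - γ) * ∑' t : ℕ, ∑ s, γ ^ t * stateDist (inducedKernel P πE) μ t s
            * ∑ a, πI s a * AdvE s a := by
      simp_rw [e1]
      rw [← Finset.mul_sum]
      congr 1
      rw [← Summable.tsum_finsetSum (fun s _ => (hsummE s).mul_right _)]
    rw [e2]
    have e3 : ∀ t : ℕ, ∑ s, γ ^ t * stateDist (inducedKernel P πE) μ t s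
        * ∑ a, πI s a * AdvE s a
        = γ ^ t * ∑ s, stateDist (inducedKernel P πE) μ t s * ∑ a, πI s a * AdvE s a := by
      intro t
      rw [Finset.mul_sum]
      apply Finset.sum_congr rfl; intro s _
      ring
    simp_rw [e3]
    rw [← mul_assoc]
    have : (1 / (1 - γ)) * (1 - γ) = 1 := by field_simp
    rw [this, one_mul]
  -- per-term lower bound on the series difference
  have hdiff_bd : ∀ k : ℕ,
      -(γ ^ k * ((k : ℝ) * (ε * (ε * (1 / (2 * (1 - γ)))))))
      ≤ (γ ^ k * ∑ s, stateDist (inducedKernel P πI) μ k s * ∑ a, πI s a * AdvE s a)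
        - γ ^ k * ∑ s, stateDist (inducedKernel P πE) μ k s * ∑ a, πI s a * AdvE s a := by
    intro k
    have h1 : |(∑ s, stateDist (inducedKernel P πI) μ k s * ∑ a, πI s a * AdvE s a)
        - ∑ s, stateDist (inducedKernel P πE) μ k s * ∑ a, πI s a * AdvE s a|
        ≤ (k : ℝ) * ε * (ε * (1 / (2 * (1 - γ)))) := by
      rw [← Finset.sum_sub_distrib]
      calc |∑ s, (stateDist (inducedKernel P πI) μ k s * (∑ a, πI s a * AdvE s a)
            - stateDist (inducedKernel P πE) μ k s * ∑ a, πI s a * AdvE s a)|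
          ≤ ∑ s, |stateDist (inducedKernel P πI) μ k s * (∑ a, πI s a * AdvE s a)
            - stateDist (inducedKernel P πE) μ k s * ∑ a, πI s a * AdvE s a| :=
            Finset.abs_sum_le_sum_abs _ _
        _ ≤ ∑ s, |stateDist (inducedKernel P πI) μ k s
              - stateDist (inducedKernel P πE) μ k s| * (ε * (1 / (2 * (1 - γ)))) := by
            apply Finset.sum_le_sum; intro s _
            rw [← sub_mul, abs_mul]
            exact mul_le_mul_of_nonneg_left (hAbar_bd s) (abs_nonneg _)
        _ = (∑ s, |stateDist (inducedKernel P πI) μ k s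
              - stateDist (inducedKernel P πE) μ k s|) * (ε * (1 / (2 * (1 - γ)))) :=
            (Finset.sum_mul _ _ _).symm
        _ ≤ ((k : ℝ) * ε) * (ε * (1 / (2 * (1 - γ)))) :=
            mul_le_mul_of_nonneg_right (hD k) (by positivity)
        _ = (k : ℝ) * ε * (ε * (1 / (2 * (1 - γ)))) := by ring
    have h2 := neg_abs_le ((∑ s, stateDist (inducedKernel P πI) μ k s * ∑ a, πI s a * AdvE s a)
        - ∑ s, stateDist (inducedKernel P πE) μ k s * ∑ a, πI s a * AdvE s a)
    have h3 : -((k : ℝ) * ε * (ε * (1 / (2 * (1 - γ)))))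
        ≤ (∑ s, stateDist (inducedKernel P πI) μ k s * ∑ a, πI s a * AdvE s a)
          - ∑ s, stateDist (inducedKernel P πE) μ k s * ∑ a, πI s a * AdvE s a := by
      linarith
    have h4 := mul_le_mul_of_nonneg_left h3 (pow_nonneg hγ0 k)
    calc -(γ ^ k * ((k : ℝ) * (ε * (ε * (1 / (2 * (1 - γ)))))))
        = γ ^ k * (-((k : ℝ) * ε * (ε * (1 / (2 * (1 - γ)))))) := by ring
      _ ≤ γ ^ k * ((∑ s, stateDist (inducedKernel P πI) μ k s * ∑ a, πI s a * AdvE s a)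
          - ∑ s, stateDist (inducedKernel P πE) μ k s * ∑ a, πI s a * AdvE s a) := h4
      _ = _ := by ring
  -- summability of the lower-bound series and its value
  have hγnorm : ‖γ‖ < 1 := by rw [Real.norm_eq_abs, abs_of_nonneg hγ0]; exact hγ1
  have hlo_summ : Summable (fun k : ℕ =>
      -(γ ^ k * ((k : ℝ) * (ε * (ε * (1 / (2 * (1 - γ)))))))) := by
    apply Summable.neg
    have h := summable_pow_mul_geometric_of_norm_lt_one 1 hγnorm (R := ℝ)
    exact (h.mul_right (ε * (ε * (1 / (2 * (1 - γ)))))).congr (fun k => by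
      push_cast; ring)
  have hlo_val : ∑' k : ℕ, -(γ ^ k * ((k : ℝ) * (ε * (ε * (1 / (2 * (1 - γ)))))))
      = -(γ / (1 - γ) ^ 2 * (ε * (ε * (1 / (2 * (1 - γ)))))) := by
    rw [tsum_neg]
    congr 1
    have h := tsum_coe_mul_geometric_of_norm_lt_one hγnorm (𝕜 := ℝ)
    calc ∑' k : ℕ, γ ^ k * ((k : ℝ) * (ε * (ε * (1 / (2 * (1 - γ))))))
        = ∑' k : ℕ, ((k : ℝ) * γ ^ k) * (ε * (ε * (1 / (2 * (1 - γ))))) := by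
          apply tsum_congr; intro k; ring
      _ = (∑' k : ℕ, (k : ℝ) * γ ^ k) * (ε * (ε * (1 / (2 * (1 - γ))))) := tsum_mul_right
      _ = γ / (1 - γ) ^ 2 * (ε * (ε * (1 / (2 * (1 - γ))))) := by rw [h]
  -- put everything together
  have hkey : ∑' k : ℕ,
      ((γ ^ k * ∑ s, stateDist (inducedKernel P πI) μ k s * ∑ a, πI s a * AdvE s a)
        - γ ^ k * ∑ s, stateDist (inducedKernel P πE) μ k s * ∑ a, πI s a * AdvE s a)
      ≥ -(γ / (1 - γ) ^ 2 * (ε * (ε * (1 / (2 * (1 - γ)))))) := by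
    rw [← hlo_val]
    exact Summable.tsum_le_tsum hdiff_bd hlo_summ (hIsum.summable.sub hEsummable)
  have hsplit : ∑' k : ℕ,
      ((γ ^ k * ∑ s, stateDist (inducedKernel P πI) μ k s * ∑ a, πI s a * AdvE s a)
        - γ ^ k * ∑ s, stateDist (inducedKernel P πE) μ k s * ∑ a, πI s a * AdvE s a)
      = ((∑ s, μ s * VI s) - ∑ s, μ s * VE s)
        - ∑' k : ℕ, γ ^ k * ∑ s, stateDist (inducedKernel P πE) μ k s
            * ∑ a, πI s a * AdvE s a := by
    rw [Summable.tsum_sub hIsum.summable hEsummable, hIsum.tsum_eq]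
  rw [ge_iff_le, hocc]
  have hfinal : γ / (2 * (1 - γ) ^ 3) * ε ^ 2
      = γ / (1 - γ) ^ 2 * (ε * (ε * (1 / (2 * (1 - γ))))) := by
    field_simp
  rw [hfinal]
  rw [hsplit] at hkey
  linarith
end
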